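/- Let K ≥ 2 and let η : {1,…,K} × {1,…,K} → (0,∞), writing η_{k→ℓ} := η(k,ℓ). Suppose that for every L ≥ 1 and all PAIRWISE DISTINCT indices j_1,…,j_L ∈ {1,…,K}, the cyclic product η_{j_1→j_2} ⋯ η_{j_L→j_1} ≥ 1. Then for every m ≥ 1 and all (not necessarily distinct) indices j_1,…,j_m ∈ {1,…,K}, the cyclic product η_{j_1→j_2} ⋯ η_{j_m→j_1} ≥ 1. -/

import Mathlib

noncomputable section

open Finset
open Fin.NatCast

/-- Unfold a cyclic product over `Fin (n+1)` into a product over `range n`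
plus the closing edge. -/
private lemma cycProd {K : ℕ} (η : Fin K → Fin K → ℝ) (n : ℕ) (h : ℕ → Fin K) :
    ∏ i : Fin (n + 1), η (h i.val) (h ((i + 1 : Fin (n + 1)).val)) =
      (∏ i ∈ Finset.range n, η (h i) (h (i + 1))) * η (h n) (h 0) := by
  rw [Fin.prod_univ_castSucc]
  congr 1
  · rw [← Fin.prod_univ_eq_prod_range (fun i => η (h i) (h (i + 1))) n]
    refine Finset.prod_congr rfl fun i _ => ?_
    have h1 : ((i.castSucc + 1 : Fin (n + 1)).val) = i.val + 1 :=
      Fin.val_add_one_of_lt (Fin.castSucc_lt_last i)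
    simp [h1]
  · have hl : (Fin.last n + 1 : Fin (n + 1)) = 0 := by
      simp
    simp [hl, Fin.val_last]

theorem stmt7 (K : ℕ) (hK : 2 ≤ K) (η : Fin K → Fin K → ℝ)
    (hpos : ∀ k ℓ, 0 < η k ℓ)
    (hdistinct : ∀ (L : ℕ) (j : Fin (L + 1) → Fin K), Function.Injective j →
      1 ≤ ∏ i : Fin (L + 1), η (j i) (j (i + 1))) :
    ∀ (m : ℕ) (j : Fin (m + 1) → Fin K),
      1 ≤ ∏ i : Fin (m + 1), η (j i) (j (i + 1)) := by
  intro m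
  induction m using Nat.strong_induction_on with
  | _ m IH =>
    intro j
    by_cases hinj : Function.Injective j
    · exact hdistinct m j hinj
    rw [Function.not_injective_iff] at hinj
    obtain ⟨a, b, hab, hne⟩ := hinj
    -- rotate the cycle so that the repeated index occurs at position 0
    set j' : Fin (m + 1) → Fin K := fun i => j (i + a) with hj'def
    have hrot : ∏ i : Fin (m + 1), η (j i) (j (i + 1)) =
        ∏ i : Fin (m + 1), η (j' i) (j' (i + 1)) := by
      refine (Fintype.prod_equiv (Equiv.addRight a) _ _ fun x => ?_).symm
      show η (j' x) (j' (x + 1)) = η (j (x + a)) (j (x + a + 1))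
      simp [hj'def, add_right_comm]
    rw [hrot]
    set c : Fin (m + 1) := b - a with hcdef
    have hc : c ≠ 0 := by
      simp [hcdef, sub_eq_zero]
      exact fun h => hne h.symm
    have h0 : j' 0 = j' c := by
      simp [hj'def, hcdef, sub_add_cancel]
      exact hab
    clear hrot hab hne
    -- now argue with j', which satisfies j' 0 = j' c, c ≠ 0
    set t := c.val with htdef
    have ht1 : 0 < t := Nat.pos_of_ne_zero (fun h => hc (Fin.ext h))
    have ht2 : t ≤ m := Nat.lt_succ_iff.mp c.isLt
    set g : ℕ → Fin K := fun i => j' ((i : Fin (m + 1))) with hgdef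
    have hgj : ∀ i : Fin (m + 1), g i.val = j' i := fun i => by
      simp [hgdef, Fin.cast_val_eq_self]
    have hg0 : g t = g 0 := by
      have h1 : ((t : ℕ) : Fin (m + 1)) = c := by
        rw [htdef]; exact Fin.cast_val_eq_self c
      simp [hgdef, h1, ← h0]
    have hgm : g (m + 1) = g 0 := by
      simp [hgdef]
    -- rewrite the full cyclic product through g
    have hfull : ∏ i : Fin (m + 1), η (j' i) (j' (i + 1)) =
        (∏ i ∈ Finset.range m, η (g i) (g (i + 1))) * η (g m) (g 0) := by
      rw [← cycProd η m g]
      exact Finset.prod_congr rfl fun i _ => by rw [hgj, hgj]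
    rw [hfull]
    obtain ⟨t', ht'⟩ : ∃ t', t = t' + 1 := ⟨t - 1, by omega⟩
    rw [ht'] at hg0 ht2
    set s' := m - (t' + 1) with hs'def
    have hms : m = (t' + 1) + s' := by omega
    -- first cycle: indices 0, 1, ..., t'
    have h1 : 1 ≤ ∏ i ∈ Finset.range (t' + 1), η (g i) (g (i + 1)) := by
      have := IH t' (by omega) (fun i => g i.val)
      rw [cycProd η t' g] at this
      rw [Finset.prod_range_succ]
      calc 1 ≤ (∏ i ∈ Finset.range t', η (g i) (g (i + 1))) * η (g t') (g 0) := this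
        _ = (∏ i ∈ Finset.range t', η (g i) (g (i + 1))) * η (g t') (g (t' + 1)) := by
            rw [hg0]
    -- second cycle: indices t, t+1, ..., m (and g (t) = g 0)
    have h2 : 1 ≤ (∏ i ∈ Finset.range s', η (g (t' + 1 + i)) (g (t' + 1 + i + 1))) *
        η (g (t' + 1 + s')) (g 0) := by
      have := IH s' (by omega) (fun i => g (t' + 1 + i.val))
      rw [cycProd η s' (fun i => g (t' + 1 + i))] at this
      simpa only [← Nat.add_assoc, Nat.add_zero, hg0] using this
    -- split the full product
    rw [hms, Finset.prod_range_add, mul_assoc]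
    have hA : 0 < ∏ i ∈ Finset.range (t' + 1), η (g i) (g (i + 1)) :=
      Finset.prod_pos fun i _ => hpos _ _
    calc (1 : ℝ) = 1 * 1 := (one_mul 1).symm
      _ ≤ (∏ i ∈ Finset.range (t' + 1), η (g i) (g (i + 1))) *
          ((∏ i ∈ Finset.range s', η (g (t' + 1 + i)) (g (t' + 1 + i + 1))) *
            η (g (t' + 1 + s')) (g 0)) := by
          apply mul_le_mul h1 h2 zero_le_one (le_of_lt hA)
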